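/- Let A = [A_{i,j}]_{i,j=1}^m ∈ M_m(M_n) be positive semidefinite. Then (tr A)·I_{mn} + (tr_2 A) ⊗ I_n ≥ A + I_m ⊗ (tr_1 A) + 2(tr_2 D_A) ⊗ I_n − 2D_A, where D_A = A_{1,1} ⊕ A_{2,2} ⊕ ⋯ ⊕ A_{m,m}. -/

import Mathlib

open Matrix Kronecker BigOperators
open scoped ComplexOrder

noncomputable section

/-- The first partial trace `tr₁ A = ∑ i, A_{i,i} ∈ M_n`. -/
def tr1 {m n : ℕ} (A : Matrix (Fin m × Fin n) (Fin m × Fin n) ℂ) :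
    Matrix (Fin n) (Fin n) ℂ :=
  fun r s => ∑ i, A (i, r) (i, s)

/-- The second partial trace `tr₂ A = [tr A_{i,j}] ∈ M_m`. -/
def tr2 {m n : ℕ} (A : Matrix (Fin m × Fin n) (Fin m × Fin n) ℂ) :
    Matrix (Fin m) (Fin m) ℂ :=
  fun i j => ∑ r, A (i, r) (j, r)

/-- `D_A = A₁₁ ⊕ A₂₂ ⊕ ⋯ ⊕ A_mm`, the block diagonal part of `A`. -/
def blockDiagPart {m n : ℕ} (A : Matrix (Fin m × Fin n) (Fin m × Fin n) ℂ) :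
    Matrix (Fin m × Fin n) (Fin m × Fin n) ℂ :=
  fun p q => if p.1 = q.1 then A p q else 0

namespace Stmt9Aux

variable {m n : ℕ}

lemma qf (M : Matrix (Fin m × Fin n) (Fin m × Fin n) ℂ) (x : Fin m × Fin n → ℂ) :
    star x ⬝ᵥ M *ᵥ x = ∑ i, ∑ r, ∑ j, ∑ s, star (x (i, r)) * M (i, r) (j, s) * x (j, s) := by
  rw [show star x ⬝ᵥ M *ᵥ x = ∑ p, ∑ q, star (x p) * M p q * x q by
    simp [dotProduct, Matrix.mulVec, Finset.mul_sum, mul_assoc]]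
  simp only [Fintype.sum_prod_type]

lemma Q1 (x : Fin m × Fin n → ℂ) :
    star x ⬝ᵥ (1 : Matrix (Fin m × Fin n) (Fin m × Fin n) ℂ) *ᵥ x
      = ∑ j, ∑ s, star (x (j, s)) * x (j, s) := by
  have h : star x ⬝ᵥ (1 : Matrix (Fin m × Fin n) (Fin m × Fin n) ℂ) *ᵥ x
      = ∑ p, star (x p) * x p := by
    rw [show star x ⬝ᵥ (1 : Matrix (Fin m × Fin n) (Fin m × Fin n) ℂ) *ᵥ x
        = ∑ p, ∑ q, star (x p) * ((1:Matrix (Fin m × Fin n) (Fin m × Fin n) ℂ) p q) * x q by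
      simp [dotProduct, Matrix.mulVec, Finset.mul_sum, mul_assoc]]
    refine Finset.sum_congr rfl fun p _ => ?_
    simp [Matrix.one_apply, Finset.sum_ite_eq, mul_ite]
  rw [h, show (∑ p, star (x p) * x p) = ∑ j, ∑ s, star (x (j, s)) * x (j, s) from Fintype.sum_prod_type _]

lemma htr (A : Matrix (Fin m × Fin n) (Fin m × Fin n) ℂ) :
    A.trace = ∑ i, ∑ r, A (i, r) (i, r) := by
  rw [Matrix.trace, Fintype.sum_prod_type]; rfl

lemma Q2 (A : Matrix (Fin m × Fin n) (Fin m × Fin n) ℂ) (x : Fin m × Fin n → ℂ) :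
    star x ⬝ᵥ (tr2 A ⊗ₖ (1 : Matrix (Fin n) (Fin n) ℂ)) *ᵥ x
      = ∑ i, ∑ j, (∑ r, A (i, r) (j, r)) * (∑ s, star (x (i, s)) * x (j, s)) := by
  rw [qf]
  simp only [kroneckerMap_apply, Matrix.one_apply, mul_ite, ite_mul, mul_zero, zero_mul, mul_one,
    Finset.sum_ite_eq, Finset.sum_ite_eq', Finset.mem_univ, if_true]
  refine Finset.sum_congr rfl fun i _ => ?_
  rw [Finset.sum_comm]
  refine Finset.sum_congr rfl fun j _ => ?_
  rw [Finset.mul_sum]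
  refine Finset.sum_congr rfl fun r _ => ?_
  simp only [tr2]
  ring

lemma Q3 (A : Matrix (Fin m × Fin n) (Fin m × Fin n) ℂ) (x : Fin m × Fin n → ℂ) :
    star x ⬝ᵥ A *ᵥ x
      = ∑ i, ∑ j, ∑ r, ∑ s, star (x (i, r)) * A (i, r) (j, s) * x (j, s) := by
  rw [qf]
  refine Finset.sum_congr rfl fun i _ => ?_
  rw [Finset.sum_comm]

lemma Q4 (A : Matrix (Fin m × Fin n) (Fin m × Fin n) ℂ) (x : Fin m × Fin n → ℂ) :
    star x ⬝ᵥ ((1 : Matrix (Fin m) (Fin m) ℂ) ⊗ₖ tr1 A) *ᵥ x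
      = ∑ i, ∑ j, ∑ r, ∑ s, A (i, r) (i, s) * (star (x (j, r)) * x (j, s)) := by
  rw [qf]
  simp only [kroneckerMap_apply, Matrix.one_apply, mul_ite, ite_mul, mul_zero, zero_mul, mul_one,
    one_mul, Finset.sum_ite_irrel, Finset.sum_const_zero, Finset.sum_ite_eq, Finset.sum_ite_eq',
    Finset.mem_univ, if_true]
  conv_rhs => rw [Finset.sum_comm]
  refine Finset.sum_congr rfl fun j _ => ?_
  conv_rhs => rw [Finset.sum_comm]
  refine Finset.sum_congr rfl fun r _ => ?_
  conv_rhs => rw [Finset.sum_comm]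
  refine Finset.sum_congr rfl fun s _ => ?_
  simp only [tr1]
  rw [Finset.mul_sum, Finset.sum_mul]
  refine Finset.sum_congr rfl fun i _ => ?_
  ring

lemma Q5 (A : Matrix (Fin m × Fin n) (Fin m × Fin n) ℂ) (x : Fin m × Fin n → ℂ) :
    star x ⬝ᵥ (tr2 (blockDiagPart A) ⊗ₖ (1 : Matrix (Fin n) (Fin n) ℂ)) *ᵥ x
      = ∑ i, (∑ r, A (i, r) (i, r)) * (∑ s, star (x (i, s)) * x (i, s)) := by
  rw [Q2]
  unfold blockDiagPart
  dsimp only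
  refine Finset.sum_congr rfl fun i _ => ?_
  rw [Finset.sum_eq_single i (fun j _ hj => by simp [Ne.symm hj]) (by simp)]
  simp

lemma Q6 (A : Matrix (Fin m × Fin n) (Fin m × Fin n) ℂ) (x : Fin m × Fin n → ℂ) :
    star x ⬝ᵥ (blockDiagPart A) *ᵥ x
      = ∑ i, ∑ r, ∑ s, star (x (i, r)) * A (i, r) (i, s) * x (i, s) := by
  rw [qf]
  unfold blockDiagPart
  dsimp only
  simp only [mul_ite, ite_mul, mul_zero, zero_mul, Finset.sum_ite_irrel,
    Finset.sum_const_zero, Finset.sum_ite_eq, Finset.sum_ite_eq', Finset.mem_univ, if_true]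

/-- The per-pair contribution to the quadratic form. -/
def T (A : Matrix (Fin m × Fin n) (Fin m × Fin n) ℂ) (x : Fin m × Fin n → ℂ)
    (i j : Fin m) : ℂ :=
  (∑ r, A (i, r) (i, r)) * (∑ s, star (x (j, s)) * x (j, s))
  + (∑ r, A (i, r) (j, r)) * (∑ s, star (x (i, s)) * x (j, s))
  - (∑ r, ∑ s, star (x (i, r)) * A (i, r) (j, s) * x (j, s))
  - (∑ r, ∑ s, A (i, r) (i, s) * (star (x (j, r)) * x (j, s)))

lemma master (A : Matrix (Fin m × Fin n) (Fin m × Fin n) ℂ) (x : Fin m × Fin n → ℂ) :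
    star x ⬝ᵥ (A.trace • (1 : Matrix (Fin m × Fin n) (Fin m × Fin n) ℂ)
      + tr2 A ⊗ₖ (1 : Matrix (Fin n) (Fin n) ℂ)
      - (A + (1 : Matrix (Fin m) (Fin m) ℂ) ⊗ₖ tr1 A
        + 2 • (tr2 (blockDiagPart A) ⊗ₖ (1 : Matrix (Fin n) (Fin n) ℂ))
        - 2 • blockDiagPart A)) *ᵥ x
      = (∑ i, ∑ j, T A x i j) - ∑ i, T A x i i := by
  rw [show ((2 • (tr2 (blockDiagPart A) ⊗ₖ (1 : Matrix (Fin n) (Fin n) ℂ))))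
      = (2:ℂ) • ((tr2 (blockDiagPart A) ⊗ₖ (1 : Matrix (Fin n) (Fin n) ℂ))) by
    rw [two_smul, two_smul]]
  rw [show ((2 • blockDiagPart A)) = (2:ℂ) • (blockDiagPart A) by rw [two_smul, two_smul]]
  simp only [Matrix.sub_mulVec, Matrix.add_mulVec, Matrix.smul_mulVec]
  simp only [dotProduct_sub, dotProduct_add, dotProduct_smul]
  rw [Q1, Q2, Q3, Q4, Q5, Q6, htr A]
  simp only [smul_eq_mul]
  -- now pure sum algebra
  simp only [T]
  rw [Finset.sum_sub_distrib, Finset.sum_sub_distrib, Finset.sum_add_distrib]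
  rw [show (∑ i, ∑ j, ((∑ r, A (i, r) (i, r)) * (∑ s, star (x (j, s)) * x (j, s))
        + (∑ r, A (i, r) (j, r)) * (∑ s, star (x (i, s)) * x (j, s))
        - (∑ r, ∑ s, star (x (i, r)) * A (i, r) (j, s) * x (j, s))
        - (∑ r, ∑ s, A (i, r) (i, s) * (star (x (j, r)) * x (j, s)))))
      = (∑ i, ∑ j, (∑ r, A (i, r) (i, r)) * (∑ s, star (x (j, s)) * x (j, s)))
        + (∑ i, ∑ j, (∑ r, A (i, r) (j, r)) * (∑ s, star (x (i, s)) * x (j, s)))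
        - (∑ i, ∑ j, ∑ r, ∑ s, star (x (i, r)) * A (i, r) (j, s) * x (j, s))
        - (∑ i, ∑ j, ∑ r, ∑ s, A (i, r) (i, s) * (star (x (j, r)) * x (j, s))) by
    simp only [Finset.sum_sub_distrib, Finset.sum_add_distrib]]
  rw [show (∑ i, ∑ j, (∑ r, A (i, r) (i, r)) * (∑ s, star (x (j, s)) * x (j, s)))
      = (∑ i, ∑ r, A (i, r) (i, r)) * (∑ j, ∑ s, star (x (j, s)) * x (j, s)) from
    (Finset.sum_mul_sum _ _ _ _).symm]
  rw [show (∑ i, ∑ r, ∑ s, A (i, r) (i, s) * (star (x (i, r)) * x (i, s)))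
      = ∑ i, ∑ r, ∑ s, star (x (i, r)) * A (i, r) (i, s) * x (i, s) by
    refine Finset.sum_congr rfl fun i _ => Finset.sum_congr rfl fun r _ =>
      Finset.sum_congr rfl fun s _ => by ring]
  ring

lemma sos (x y : Fin m × Fin n → ℂ) (i j : Fin m) :
    2 * (T (fun p q => y p * star (y q)) x i j + T (fun p q => y p * star (y q)) x j i)
      = ∑ r, ∑ s, star (x (j, r) * y (i, s) - y (i, r) * x (j, s)
            + x (i, r) * y (j, s) - y (j, r) * x (i, s)) * (x (j, r) * y (i, s) - y (i, r) * x (j, s)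
            + x (i, r) * y (j, s) - y (j, r) * x (i, s)) := by
  have hpt : ∀ r s : Fin n,
      star (x (j, r) * y (i, s) - y (i, r) * x (j, s)
            + x (i, r) * y (j, s) - y (j, r) * x (i, s)) * (x (j, r) * y (i, s) - y (i, r) * x (j, s)
            + x (i, r) * y (j, s) - y (j, r) * x (i, s))
      = (star (x (j, r)) * x (j, r)) * (y (i, s) * star (y (i, s)))
        - (y (i, r) * star (x (j, r))) * (star (y (i, s)) * x (j, s))
        + (star (x (j, r)) * x (i, r)) * (y (j, s) * star (y (i, s)))
        - (star (x (j, r)) * y (j, r)) * (star (y (i, s)) * x (i, s))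
        - (star (y (i, r)) * x (j, r)) * (y (i, s) * star (x (j, s)))
        + (y (i, r) * star (y (i, r))) * (star (x (j, s)) * x (j, s))
        - (star (y (i, r)) * x (i, r)) * (star (x (j, s)) * y (j, s))
        + (y (j, r) * star (y (i, r))) * (star (x (j, s)) * x (i, s))
        + (star (x (i, r)) * x (j, r)) * (y (i, s) * star (y (j, s)))
        - (star (x (i, r)) * y (i, r)) * (star (y (j, s)) * x (j, s))
        + (star (x (i, r)) * x (i, r)) * (y (j, s) * star (y (j, s)))
        - (y (j, r) * star (x (i, r))) * (star (y (j, s)) * x (i, s))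
        - (star (y (j, r)) * x (j, r)) * (star (x (i, s)) * y (i, s))
        + (y (i, r) * star (y (j, r))) * (star (x (i, s)) * x (j, s))
        - (star (y (j, r)) * x (i, r)) * (y (j, s) * star (x (i, s)))
        + (y (j, r) * star (y (j, r))) * (star (x (i, s)) * x (i, s)) := by
    intro r s
    simp only [star_sub, star_add, star_mul']
    ring
  have h1 : (∑ r, ∑ s, star (x (i, r)) * (y (i, r) * star (y (j, s))) * x (j, s))
      = (∑ r, star (x (i, r)) * y (i, r)) * (∑ s, star (y (j, s)) * x (j, s)) := by
    rw [Finset.sum_mul_sum]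
    exact Finset.sum_congr rfl fun r _ => Finset.sum_congr rfl fun s _ => by ring
  have h2 : (∑ r, ∑ s, (y (i, r) * star (y (i, s))) * (star (x (j, r)) * x (j, s)))
      = (∑ r, y (i, r) * star (x (j, r))) * (∑ s, star (y (i, s)) * x (j, s)) := by
    rw [Finset.sum_mul_sum]
    exact Finset.sum_congr rfl fun r _ => Finset.sum_congr rfl fun s _ => by ring
  have h3 : (∑ r, ∑ s, star (x (j, r)) * (y (j, r) * star (y (i, s))) * x (i, s))
      = (∑ r, star (x (j, r)) * y (j, r)) * (∑ s, star (y (i, s)) * x (i, s)) := by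
    rw [Finset.sum_mul_sum]
    exact Finset.sum_congr rfl fun r _ => Finset.sum_congr rfl fun s _ => by ring
  have h4 : (∑ r, ∑ s, (y (j, r) * star (y (j, s))) * (star (x (i, r)) * x (i, s)))
      = (∑ r, y (j, r) * star (x (i, r))) * (∑ s, star (y (j, s)) * x (i, s)) := by
    rw [Finset.sum_mul_sum]
    exact Finset.sum_congr rfl fun r _ => Finset.sum_congr rfl fun s _ => by ring
  conv_lhs => simp only [T]
  rw [h1, h2, h3, h4]
  conv_rhs => rw [show (∑ r, ∑ s, star (x (j, r) * y (i, s) - y (i, r) * x (j, s)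
            + x (i, r) * y (j, s) - y (j, r) * x (i, s)) * (x (j, r) * y (i, s) - y (i, r) * x (j, s)
            + x (i, r) * y (j, s) - y (j, r) * x (i, s)))
    = ∑ r : Fin n, ∑ s : Fin n, ((star (x (j, r)) * x (j, r)) * (y (i, s) * star (y (i, s)))
        - (y (i, r) * star (x (j, r))) * (star (y (i, s)) * x (j, s))
        + (star (x (j, r)) * x (i, r)) * (y (j, s) * star (y (i, s)))
        - (star (x (j, r)) * y (j, r)) * (star (y (i, s)) * x (i, s))
        - (star (y (i, r)) * x (j, r)) * (y (i, s) * star (x (j, s)))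
        + (y (i, r) * star (y (i, r))) * (star (x (j, s)) * x (j, s))
        - (star (y (i, r)) * x (i, r)) * (star (x (j, s)) * y (j, s))
        + (y (j, r) * star (y (i, r))) * (star (x (j, s)) * x (i, s))
        + (star (x (i, r)) * x (j, r)) * (y (i, s) * star (y (j, s)))
        - (star (x (i, r)) * y (i, r)) * (star (y (j, s)) * x (j, s))
        + (star (x (i, r)) * x (i, r)) * (y (j, s) * star (y (j, s)))
        - (y (j, r) * star (x (i, r))) * (star (y (j, s)) * x (i, s))
        - (star (y (j, r)) * x (j, r)) * (star (x (i, s)) * y (i, s))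
        + (y (i, r) * star (y (j, r))) * (star (x (i, s)) * x (j, s))
        - (star (y (j, r)) * x (i, r)) * (y (j, s) * star (x (i, s)))
        + (y (j, r) * star (y (j, r))) * (star (x (i, s)) * x (i, s)))
    from Finset.sum_congr rfl fun r _ => Finset.sum_congr rfl fun s _ => hpt r s]
  simp only [Finset.sum_add_distrib, Finset.sum_sub_distrib, ← Finset.sum_mul_sum]
  ring

lemma T_sum {κ : Type*} [Fintype κ] (M : κ → Matrix (Fin m × Fin n) (Fin m × Fin n) ℂ)
    (x : Fin m × Fin n → ℂ) (i j : Fin m) :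
    T (fun p q => ∑ k, M k p q) x i j = ∑ k, T (M k) x i j := by
  simp only [T]
  rw [show ((∑ r, ∑ k, M k (i, r) (i, r)) * (∑ s, star (x (j, s)) * x (j, s)))
      = ∑ k, (∑ r, M k (i, r) (i, r)) * (∑ s, star (x (j, s)) * x (j, s)) by
    rw [Finset.sum_comm, Finset.sum_mul]]
  rw [show ((∑ r, ∑ k, M k (i, r) (j, r)) * (∑ s, star (x (i, s)) * x (j, s)))
      = ∑ k, (∑ r, M k (i, r) (j, r)) * (∑ s, star (x (i, s)) * x (j, s)) by
    rw [Finset.sum_comm, Finset.sum_mul]]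
  rw [show (∑ r, ∑ s, star (x (i, r)) * (∑ k, M k (i, r) (j, s)) * x (j, s))
      = ∑ k, ∑ r, ∑ s, star (x (i, r)) * M k (i, r) (j, s) * x (j, s) by
    rw [show (∑ r, ∑ s, star (x (i, r)) * (∑ k, M k (i, r) (j, s)) * x (j, s))
        = ∑ r, ∑ s, ∑ k, star (x (i, r)) * M k (i, r) (j, s) * x (j, s) from
      Finset.sum_congr rfl fun r _ => Finset.sum_congr rfl fun s _ => by
        rw [Finset.mul_sum, Finset.sum_mul]]
    rw [show (∑ r, ∑ s, ∑ k, star (x (i, r)) * M k (i, r) (j, s) * x (j, s))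
        = ∑ r, ∑ k, ∑ s, star (x (i, r)) * M k (i, r) (j, s) * x (j, s) from
      Finset.sum_congr rfl fun r _ => by rw [Finset.sum_comm]]
    rw [Finset.sum_comm]]
  rw [show (∑ r, ∑ s, (∑ k, M k (i, r) (i, s)) * (star (x (j, r)) * x (j, s)))
      = ∑ k, ∑ r, ∑ s, M k (i, r) (i, s) * (star (x (j, r)) * x (j, s)) by
    rw [show (∑ r, ∑ s, (∑ k, M k (i, r) (i, s)) * (star (x (j, r)) * x (j, s)))
        = ∑ r, ∑ s, ∑ k, M k (i, r) (i, s) * (star (x (j, r)) * x (j, s)) from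
      Finset.sum_congr rfl fun r _ => Finset.sum_congr rfl fun s _ => by
        rw [Finset.sum_mul]]
    rw [show (∑ r, ∑ s, ∑ k, M k (i, r) (i, s) * (star (x (j, r)) * x (j, s)))
        = ∑ r, ∑ k, ∑ s, M k (i, r) (i, s) * (star (x (j, r)) * x (j, s)) from
      Finset.sum_congr rfl fun r _ => by rw [Finset.sum_comm]]
    rw [Finset.sum_comm]]
  simp only [Finset.sum_add_distrib, Finset.sum_sub_distrib]

lemma half_nonneg {z : ℂ} (h : 0 ≤ 2 * z) : 0 ≤ z := by
  rw [Complex.le_def] at h ⊢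
  constructor
  · have := h.1; simp [Complex.mul_re] at this ⊢; linarith
  · have := h.2; simp [Complex.mul_im] at this ⊢; linarith

lemma T_nonneg (A : Matrix (Fin m × Fin n) (Fin m × Fin n) ℂ) (hA : A.PosSemidef)
    (x : Fin m × Fin n → ℂ) (i j : Fin m) :
    0 ≤ T A x i j + T A x j i := by
  obtain ⟨m', v, hB⟩ := Matrix.posSemidef_iff_eq_sum_vecMulVec.mp hA
  set y : Fin m' → (Fin m × Fin n) → ℂ := v with hy
  have hAe : A = fun p q => ∑ k, (fun p q => y k p * star (y k q)) p q := by
    rw [hB]; funext p q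
    simp [Matrix.sum_apply, Matrix.vecMulVec_apply, hy]
  rw [hAe, T_sum (fun k => fun p q => y k p * star (y k q)),
    T_sum (fun k => fun p q => y k p * star (y k q)), ← Finset.sum_add_distrib]
  refine Finset.sum_nonneg fun k _ => ?_
  refine half_nonneg ?_
  rw [show (2 : ℂ) * (T (fun p q => y k p * star (y k q)) x i j
      + T (fun p q => y k p * star (y k q)) x j i) = _ from sos x (y k) i j]
  refine Finset.sum_nonneg fun r _ => Finset.sum_nonneg fun s _ => star_mul_self_nonneg _


lemma herm_all (A : Matrix (Fin m × Fin n) (Fin m × Fin n) ℂ) (hA : A.IsHermitian) :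
    (A.trace • (1 : Matrix (Fin m × Fin n) (Fin m × Fin n) ℂ)
      + tr2 A ⊗ₖ (1 : Matrix (Fin n) (Fin n) ℂ)
      - (A + (1 : Matrix (Fin m) (Fin m) ℂ) ⊗ₖ tr1 A
        + 2 • (tr2 (blockDiagPart A) ⊗ₖ (1 : Matrix (Fin n) (Fin n) ℂ))
        - 2 • blockDiagPart A)).IsHermitian := by
  have hH : ∀ p q, star (A q p) = A p q := fun p q => congrFun (congrFun hA p) q
  have htrace : star A.trace = A.trace := by
    rw [← Matrix.trace_conjTranspose, hA]
  have hsm : (A.trace • (1 : Matrix (Fin m × Fin n) (Fin m × Fin n) ℂ)).IsHermitian := by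
    unfold Matrix.IsHermitian
    rw [Matrix.conjTranspose_smul, Matrix.conjTranspose_one, htrace]
  have hbd : (blockDiagPart A).IsHermitian := by
    ext p q
    simp only [Matrix.conjTranspose_apply, blockDiagPart]
    by_cases h : p.1 = q.1
    · rw [if_pos h.symm, if_pos h, hH]
    · rw [if_neg (fun hh => h hh.symm), if_neg h, star_zero]
  have hbdH : ∀ p q, star (blockDiagPart A q p) = blockDiagPart A p q :=
    fun p q => congrFun (congrFun hbd p) q
  have htr2 : ∀ (C : Matrix (Fin m × Fin n) (Fin m × Fin n) ℂ),
      C.IsHermitian → (tr2 C ⊗ₖ (1 : Matrix (Fin n) (Fin n) ℂ)).IsHermitian := by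
    intro C hC
    have hCH : ∀ p q, star (C q p) = C p q := fun p q => congrFun (congrFun hC p) q
    ext p q
    simp only [Matrix.conjTranspose_apply, kroneckerMap_apply, Matrix.one_apply, tr2,
      mul_ite, mul_one, mul_zero]
    by_cases h : p.2 = q.2
    · rw [if_pos h.symm, if_pos h, star_sum]
      exact Finset.sum_congr rfl fun r _ => hCH _ _
    · rw [if_neg (fun hh => h hh.symm), if_neg h, star_zero]
  have htr1 : ((1 : Matrix (Fin m) (Fin m) ℂ) ⊗ₖ tr1 A).IsHermitian := by
    ext p q
    simp only [Matrix.conjTranspose_apply, kroneckerMap_apply, Matrix.one_apply, tr1,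
      ite_mul, one_mul, zero_mul]
    by_cases h : p.1 = q.1
    · rw [if_pos h.symm, if_pos h, star_sum]
      exact Finset.sum_congr rfl fun i _ => hH _ _
    · rw [if_neg (fun hh => h hh.symm), if_neg h, star_zero]
  have h2bd : ((2:ℕ) • blockDiagPart A).IsHermitian := by
    rw [two_smul]; exact hbd.add hbd
  have h2tr2 : ((2:ℕ) • (tr2 (blockDiagPart A) ⊗ₖ (1 : Matrix (Fin n) (Fin n) ℂ))).IsHermitian := by
    rw [two_smul]; exact (htr2 _ hbd).add (htr2 _ hbd)
  exact (hsm.add (htr2 A hA)).sub (((hA.add htr1).add h2tr2).sub h2bd)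

theorem stmt9' (A : Matrix (Fin m × Fin n) (Fin m × Fin n) ℂ)
    (hA : A.PosSemidef) :
    (A.trace • (1 : Matrix (Fin m × Fin n) (Fin m × Fin n) ℂ)
      + tr2 A ⊗ₖ (1 : Matrix (Fin n) (Fin n) ℂ)
      - (A + (1 : Matrix (Fin m) (Fin m) ℂ) ⊗ₖ tr1 A
        + 2 • (tr2 (blockDiagPart A) ⊗ₖ (1 : Matrix (Fin n) (Fin n) ℂ))
        - 2 • blockDiagPart A)).PosSemidef := by
  rw [Matrix.posSemidef_iff_dotProduct_mulVec]
  constructor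
  · exact herm_all A hA.1
  intro x
  rw [master A x]
  have hsplit : (∑ i, ∑ j, T A x i j) - ∑ i, T A x i i
      = ∑ p ∈ Finset.univ.filter (fun p : Fin m × Fin m => ¬ p.1 = p.2), T A x p.1 p.2 := by
    have h1 : (∑ i, ∑ j, T A x i j) = ∑ p : Fin m × Fin m, T A x p.1 p.2 := by
      rw [Fintype.sum_prod_type]
    have h2 : (∑ p ∈ Finset.univ.filter (fun p : Fin m × Fin m => p.1 = p.2), T A x p.1 p.2)
        = ∑ i, T A x i i := by
      rw [Finset.sum_filter, Fintype.sum_prod_type]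
      simp [Finset.sum_ite_eq, Finset.mem_univ]
    rw [h1, ← Finset.sum_filter_add_sum_filter_not Finset.univ
      (fun p : Fin m × Fin m => p.1 = p.2) (fun p => T A x p.1 p.2), h2]
    ring
  rw [hsplit]
  set s := Finset.univ.filter (fun p : Fin m × Fin m => ¬ p.1 = p.2) with hs
  have hswap : (∑ p ∈ s, T A x p.1 p.2) = ∑ p ∈ s, T A x p.2 p.1 := by
    refine Finset.sum_nbij' (fun p => (p.2, p.1)) (fun p => (p.2, p.1)) ?_ ?_ ?_ ?_ ?_ <;>
      simp [hs, eq_comm]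
  refine half_nonneg ?_
  rw [two_mul]
  nth_rewrite 2 [hswap]
  rw [← Finset.sum_add_distrib]
  exact Finset.sum_nonneg fun p hp => T_nonneg A hA x p.1 p.2


end Stmt9Aux

/-- If `A ∈ M_m(M_n)` is positive semidefinite, then
`(tr A) I + (tr₂ A) ⊗ I_n ≥ A + I_m ⊗ (tr₁ A) + 2 (tr₂ D_A) ⊗ I_n - 2 D_A`. -/
theorem stmt9 {m n : ℕ} (A : Matrix (Fin m × Fin n) (Fin m × Fin n) ℂ)
    (hA : A.PosSemidef) :
    (A.trace • (1 : Matrix (Fin m × Fin n) (Fin m × Fin n) ℂ)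
      + tr2 A ⊗ₖ (1 : Matrix (Fin n) (Fin n) ℂ)
      - (A + (1 : Matrix (Fin m) (Fin m) ℂ) ⊗ₖ tr1 A
        + 2 • (tr2 (blockDiagPart A) ⊗ₖ (1 : Matrix (Fin n) (Fin n) ℂ))
        - 2 • blockDiagPart A)).PosSemidef := by
  exact Stmt9Aux.stmt9' A hA
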